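/- Let Q be a unital C*-algebra over ℂ and let α : C(𝕋², ℂ) → C(𝕋², Q) be a unital ⋆-algebra homomorphism such that there exist A, B, C, D, E, F, Z_{(1,0)}, Z_{(-1,0)}, O, P, Z_{(2,0)}, Z_{(-2,0)} ∈ Q with α(χ_{(1,0)}) equal to the function w ↦ χ_{(1,0)}(w)·A + χ_{(-1,0)}(w)·B + χ_{(0,1)}(w)·C + χ_{(0,-1)}(w)·D + χ_{(2,0)}(w)·E + χ_{(-2,0)}(w)·F, and α(χ_{(2,0)}) equal to the function w ↦ χ_{(1,0)}(w)·Z_{(1,0)} + χ_{(-1,0)}(w)·Z_{(-1,0)} + χ_{(0,1)}(w)·O + χ_{(0,-1)}(w)·P + χ_{(2,0)}(w)·Z_{(2,0)} + χ_{(-2,0)}(w)·Z_{(-2,0)}. Then O = 0, P = 0, and C² = D² = E² = F² = 0. (This is the coefficient-comparison step in the proof of Theorem 3.4: since α(χ_{(2,0)}) = α(χ_{(1,0)})², comparing the coefficients of χ_{(0,1)}, χ_{(0,-1)}, χ_{(0,2)}, χ_{(0,-2)}, χ_{(4,0)} and χ_{(-4,0)} on both sides yields these relations; here S'' = {±(1,0),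 ±(0,1), ±(2,0)} is the generating set of ℤ×ℤ.) -/

import Mathlib

lemma circle_coe_pow (z : Circle) (n : ℕ) : ((z ^ n : Circle) : ℂ) = (z : ℂ) ^ n :=
  Circle.coeHom.map_pow z n

@[simp] lemma circle_coe_zpow (z : Circle) (m : ℤ) : ((z ^ m : Circle) : ℂ) = (z : ℂ) ^ m := by
  cases m with
  | ofNat n => simpa [zpow_natCast] using circle_coe_pow z n
  | negSucc n => simp [zpow_negSucc, circle_coe_pow]

noncomputable def ch (p : ℤ × ℤ) : (Circle × Circle) →* ℂ where
  toFun w := ((w.1 ^ p.1 : Circle) : ℂ) * ((w.2 ^ p.2 : Circle) : ℂ)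
  map_one' := by simp
  map_mul' x y := by
    simp [Prod.fst_mul, Prod.snd_mul, mul_zpow]
    ring

lemma exp_one_zpow_inj {m m' : ℤ} (h : Complex.exp Complex.I ^ m = Complex.exp Complex.I ^ m') :
    m = m' := by
  rw [← Complex.exp_int_mul, ← Complex.exp_int_mul, Complex.exp_eq_exp_iff_exists_int] at h
  obtain ⟨n, hn⟩ := h
  have hc : (m : ℂ) = ↑m' + ↑n * (2 * ↑Real.pi) :=
    mul_right_cancel₀ Complex.I_ne_zero (by linear_combination hn)
  have hre : (m : ℝ) = m' + n * (2 * Real.pi) := by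
    have := congrArg Complex.re hc
    simpa using this
  by_contra hne
  have hn0 : n ≠ 0 := by
    rintro rfl; simp at hre; exact hne (by exact_mod_cast hre)
  have hpi : (Real.pi : ℝ) = ((m - m' : ℤ) : ℝ) / (2 * (n : ℝ)) := by
    have h2n : (2 * (n : ℝ)) ≠ 0 := by simp [hn0]
    field_simp
    push_cast
    linarith [hre]
  have hirr : Irrational (((m - m' : ℤ) : ℝ) / (2 * (n : ℝ))) := hpi ▸ irrational_pi
  have hrat : ¬ Irrational (((m - m' : ℤ) : ℝ) / (2 * (n : ℝ))) := by
    rw [show (2 * (n:ℝ)) = ((2*n : ℤ) : ℝ) by push_cast; ring]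
    rw [show (((m - m' : ℤ)):ℝ) / ((2*n : ℤ) : ℝ) = ((((m-m' : ℤ) : ℚ) / ((2*n : ℤ) : ℚ) : ℚ) : ℝ) by
      push_cast; ring]
    exact Rat.not_irrational _
  exact hrat hirr

lemma ch_inj : Function.Injective ch := by
  intro p q h
  have h1 := congrArg (fun f : (Circle × Circle) →* ℂ => f (Circle.exp 1, 1)) h
  have h2 := congrArg (fun f : (Circle × Circle) →* ℂ => f (1, Circle.exp 1)) h
  simp [ch, Circle.coe_exp] at h1 h2
  exact Prod.ext (exp_one_zpow_inj (by simpa using h1)) (exp_one_zpow_inj (by simpa using h2))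

def vv : Fin 21 → ℤ × ℤ :=
  ![(1,0),(-1,0),(0,1),(0,-1),(2,0),(-2,0),(0,0),(1,1),(1,-1),(3,0),(-1,1),
    (-1,-1),(-3,0),(0,2),(2,1),(-2,1),(0,-2),(2,-1),(-2,-1),(4,0),(-4,0)]

lemma vv_inj : Function.Injective vv := by decide

/-- The character `χ_{(m,n)} : 𝕋² → ℂ`, `χ_{(m,n)} (z, w) = z ^ m * w ^ n`, as a
continuous map on the 2-torus `𝕋² = 𝕋 × 𝕋`, where `𝕋 = {z ∈ ℂ : |z| = 1}`. -/
noncomputable def chi2 (m n : ℤ) : C(Circle × Circle, ℂ) :=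
  { toFun := fun w => ((w.1 ^ m : Circle) : ℂ) * ((w.2 ^ n : Circle) : ℂ)
    continuous_toFun := by
      exact ((continuous_subtype_val.comp
          ((continuous_zpow (G := Circle) m).comp continuous_fst)).mul
        (continuous_subtype_val.comp ((continuous_zpow (G := Circle) n).comp continuous_snd))) }

theorem stmt_15 (Q : Type*) [NormedRing Q] [StarRing Q] [CStarRing Q]
    [NormedAlgebra ℂ Q] [StarModule ℂ Q] [CompleteSpace Q]
    (α : C(Circle × Circle, ℂ) →⋆ₐ[ℂ] C(Circle × Circle, Q))
    (A B C D E F Z₁₀ Zₘ₁₀ O P Z₂₀ Zₘ₂₀ : Q)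
    (hα₁ : ∀ w : Circle × Circle,
      α (chi2 1 0) w
        = chi2 1 0 w • A + chi2 (-1) 0 w • B + chi2 0 1 w • C + chi2 0 (-1) w • D
          + chi2 2 0 w • E + chi2 (-2) 0 w • F)
    (hα₂ : ∀ w : Circle × Circle,
      α (chi2 2 0) w
        = chi2 1 0 w • Z₁₀ + chi2 (-1) 0 w • Zₘ₁₀ + chi2 0 1 w • O + chi2 0 (-1) w • P
          + chi2 2 0 w • Z₂₀ + chi2 (-2) 0 w • Zₘ₂₀) :
    O = 0 ∧ P = 0 ∧ C ^ 2 = 0 ∧ D ^ 2 = 0 ∧ E ^ 2 = 0 ∧ F ^ 2 = 0 := by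
  set KK : Fin 21 → Q :=
    ![Z₁₀ - (B*E + E*B), Zₘ₁₀ - (A*F + F*A), O, P, Z₂₀ - A*A, Zₘ₂₀ - B*B,
      -(A*B + B*A + C*D + D*C + E*F + F*E), -(A*C + C*A), -(A*D + D*A), -(A*E + E*A),
      -(B*C + C*B), -(B*D + D*B), -(B*F + F*B), -(C*C), -(C*E + E*C), -(C*F + F*C),
      -(D*D), -(D*E + E*D), -(D*F + F*D), -(E*E), -(F*F)] with hKK
  have hchi : chi2 2 0 = chi2 1 0 * chi2 1 0 := by
    ext w
    simp [chi2, zpow_ofNat, circle_coe_pow]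
    ring
  have keyQ : ∀ w : Circle × Circle, ∑ i : Fin 21, (ch (vv i) w) • KK i = 0 := by
    intro w
    have hkey : chi2 1 0 w • Z₁₀ + chi2 (-1) 0 w • Zₘ₁₀ + chi2 0 1 w • O + chi2 0 (-1) w • P
          + chi2 2 0 w • Z₂₀ + chi2 (-2) 0 w • Zₘ₂₀
        = (chi2 1 0 w • A + chi2 (-1) 0 w • B + chi2 0 1 w • C + chi2 0 (-1) w • D
          + chi2 2 0 w • E + chi2 (-2) 0 w • F)
          * (chi2 1 0 w • A + chi2 (-1) 0 w • B + chi2 0 1 w • C + chi2 0 (-1) w • D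
          + chi2 2 0 w • E + chi2 (-2) 0 w • F) := by
      have hmul : (α (chi2 2 0)) w = (α (chi2 1 0)) w * (α (chi2 1 0)) w := by
        rw [hchi, map_mul, ContinuousMap.mul_apply]
      rw [← hα₂ w, hmul, hα₁ w]
    have hz : (w.1 : ℂ) ≠ 0 := Circle.coe_ne_zero _
    have hw : (w.2 : ℂ) ≠ 0 := Circle.coe_ne_zero _
    calc ∑ i : Fin 21, (ch (vv i) w) • KK i
        = (chi2 1 0 w • Z₁₀ + chi2 (-1) 0 w • Zₘ₁₀ + chi2 0 1 w • O + chi2 0 (-1) w • P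
          + chi2 2 0 w • Z₂₀ + chi2 (-2) 0 w • Zₘ₂₀)
          - (chi2 1 0 w • A + chi2 (-1) 0 w • B + chi2 0 1 w • C + chi2 0 (-1) w • D
          + chi2 2 0 w • E + chi2 (-2) 0 w • F)
          * (chi2 1 0 w • A + chi2 (-1) 0 w • B + chi2 0 1 w • C + chi2 0 (-1) w • D
          + chi2 2 0 w • E + chi2 (-2) 0 w • F) := by
          simp only [hKK, Fin.sum_univ_succ, Fin.sum_univ_zero, Matrix.cons_val_zero,
            Matrix.cons_val_succ, add_mul, mul_add, smul_mul_smul_comm, ch, vv, chi2,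
            MonoidHom.coe_mk, OneHom.coe_mk, ContinuousMap.coe_mk, circle_coe_zpow, zpow_neg, zpow_ofNat, zpow_one, zpow_zero, circle_coe_pow]
          match_scalars <;> (try simp only [circle_coe_pow, circle_coe_zpow]; try field_simp)
          all_goals (try norm_cast)
          all_goals (try (simp only [Int.cast_negSucc, Nat.cast_one, Int.cast_one, mul_neg_one,
            mul_one, neg_inj, Nat.cast_ofNat, SetLike.coe_eq_coe]))
          all_goals (try (simp [pow_succ, pow_zero, mul_comm, mul_assoc, mul_left_comm]))
      _ = 0 := by rw [← hkey, sub_self]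
  have hzero : ∀ i : Fin 21, KK i = 0 := by
    have li : LinearIndependent ℂ (fun i : Fin 21 => ⇑(ch (vv i))) :=
      (linearIndependent_monoidHom (Circle × Circle) ℂ).comp
        (fun i => ch (vv i)) (ch_inj.comp vv_inj)
    intro i
    by_contra hx
    obtain ⟨φ, -, hφx⟩ := exists_dual_vector ℂ (KK i) (norm_ne_zero_iff.mpr hx)
    have hall : ∀ j : Fin 21, φ (KK j) = 0 := by
      have hfun : ∑ j : Fin 21, φ (KK j) • (fun x => (ch (vv j)) x) = (0 : (Circle × Circle) → ℂ) := by
        funext x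
        have := congrArg φ (keyQ x)
        simp only [map_sum, map_smul, map_zero, smul_eq_mul] at this
        simpa [Finset.sum_apply, mul_comm] using this
      exact Fintype.linearIndependent_iff.mp li (fun j => φ (KK j)) hfun
    rw [hall i] at hφx
    exact hx (norm_eq_zero.mp (Complex.ofReal_eq_zero.mp hφx.symm))
  refine ⟨?_, ?_, ?_, ?_, ?_, ?_⟩
  · have h := hzero 2; rw [hKK] at h; exact h
  · have h := hzero 3; rw [hKK] at h; exact h
  · have h := hzero 13; rw [hKK] at h
    have h' : -(C*C) = 0 := h
    rw [pow_two]; exact neg_eq_zero.mp h'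
  · have h := hzero 16; rw [hKK] at h
    have h' : -(D*D) = 0 := h
    rw [pow_two]; exact neg_eq_zero.mp h'
  · have h := hzero 19; rw [hKK] at h
    have h' : -(E*E) = 0 := h
    rw [pow_two]; exact neg_eq_zero.mp h'
  · have h := hzero 20; rw [hKK] at h
    have h' : -(F*F) = 0 := h
    rw [pow_two]; exact neg_eq_zero.mp h'
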